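/- For every ν₀ > 0 there exists a constant c > 0, depending only on ν₀, with the following property: for every finite set X, mean vector μ with μ_i > 0 and diagonal covariance Σ with σ_i² > 0 satisfying max_i σ_i/μ_i ≤ ν₀, every pair of subsets S ⊆ T ⊆ X with S nonempty, and every Q ≥ μ_S, there exists a probability distribution D on ℝ_+^T with mean (μ_i)_{i∈T} and covariance Σ_T such that E_{d∼D}[ (d_S − Q)^+ · 1{d_i ≥ μ_i for all i ∈ T} ] ≥ c·( √(σ_S² + (Q − μ_S)²) − (Q − μ_S) ). -/

import Mathlib

open MeasureTheory

section Base

variable {X : Type} [Fintype X]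

/-- `ℓ` is a metric on the finite set `X`. -/
structure IsMetric (ℓ : X → X → ℝ) : Prop where
  refl : ∀ i, ℓ i i = 0
  pos : ∀ i j, i ≠ j → 0 < ℓ i j
  symm : ∀ i j, ℓ i j = ℓ j i
  triangle : ∀ i j k, ℓ i k ≤ ℓ i j + ℓ j k

/-- The cost `C(q, d)`: the optimal value of the fulfillment LP. -/
noncomputable def cost (ℓ : X → X → ℝ) (b h : ℝ) (q d : X → ℝ) : ℝ :=
  sInf { v | ∃ x : X → X → ℝ, (∀ i j, 0 ≤ x i j) ∧
    (∀ i, ∑ j, x i j ≤ q i) ∧ (∀ j, ∑ i, x i j ≤ d j) ∧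
    v = h * ∑ i, (q i - ∑ j, x i j) + b * ∑ j, (d j - ∑ i, x i j)
        + ∑ i, ∑ j, ℓ i j * x i j }

/-- Membership in the ambiguity set `F(μ, Σ)` where `Σ = diag (σ_i ^ 2)`:
probability distributions supported on the nonnegative orthant, with mean `μ`
and (diagonal) covariance matrix `diag (σ_i ^ 2)`. -/
def memF (μ σ : X → ℝ) (D : Measure (X → ℝ)) : Prop :=
  IsProbabilityMeasure D ∧
  (∀ᵐ d ∂D, ∀ i, 0 ≤ d i) ∧
  (∀ i, Integrable (fun d => d i) D ∧ ∫ d, d i ∂D = μ i) ∧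
  (∀ i j, Integrable (fun d => (d i - μ i) * (d j - μ j)) D) ∧
  (∀ i, ∫ d, (d i - μ i) ^ 2 ∂D = (σ i) ^ 2) ∧
  (∀ i j, i ≠ j → ∫ d, (d i - μ i) * (d j - μ j) ∂D = 0)

/-- The worst-case expected cost of the inventory vector `q`. -/
noncomputable def worstExp (ℓ : X → X → ℝ) (b h : ℝ) (μ σ : X → ℝ) (q : X → ℝ) : ℝ :=
  sSup { v | ∃ D : Measure (X → ℝ), memF μ σ D ∧ v = ∫ d, cost ℓ b h q d ∂D }

/-- The optimal value `z_ODRNM` of the offline problem. -/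
noncomputable def zODRNM (ℓ : X → X → ℝ) (b h : ℝ) (μ σ : X → ℝ) : ℝ :=
  sInf { v | ∃ q : X → ℝ, (∀ i, 0 ≤ q i) ∧ v = worstExp ℓ b h μ σ q }

/-- Distance between two clusters. -/
noncomputable def setDist (ℓ : X → X → ℝ) (C C' : Finset X) : ℝ :=
  sInf { v | ∃ i ∈ C, ∃ j ∈ C', v = ℓ i j }

/-- Diameter of a cluster. -/
noncomputable def fdiam (ℓ : X → X → ℝ) (C : Finset X) : ℝ :=
  sSup { v | ∃ i ∈ C, ∃ j ∈ C, v = ℓ i j }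

/-- `P` is an `(α, β)`-well-separated partition of `(X, ℓ)` of margin `Δ`:
at most `β` families of clusters, such that clusters within a family are at pairwise
distance more than `Δ`, every cluster has diameter less than `α·Δ`, and the set of all
clusters forms a partition of `X`. -/
def IsWSP (ℓ : X → X → ℝ) (α β Δ : ℝ) (P : Finset (Finset (Finset X))) : Prop :=
  ((P.card : ℝ) ≤ β) ∧
  (∀ F ∈ P, ∀ C ∈ F, ∀ C' ∈ F, C ≠ C' → Δ < setDist ℓ C C') ∧
  (∀ F ∈ P, ∀ C ∈ F, fdiam ℓ C < α * Δ) ∧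
  (∀ x : X, ∃! C : Finset X, (∃ F ∈ P, C ∈ F) ∧ x ∈ C)

/-- Minimum pairwise distance of the metric space. -/
noncomputable def minD (ℓ : X → X → ℝ) : ℝ := sInf { v | ∃ i j : X, i ≠ j ∧ v = ℓ i j }

/-- Maximum pairwise distance of the metric space. -/
noncomputable def maxD (ℓ : X → X → ℝ) : ℝ := sSup { v | ∃ i j : X, i ≠ j ∧ v = ℓ i j }

/-- The margin `Δ₁` of the first level. -/
noncomputable def delta1 (ℓ : X → X → ℝ) (α : ℝ) : ℝ :=
  (1 / α) * max (minD ℓ) (maxD ℓ / (Fintype.card X : ℝ))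

/-- The number of levels `R = ⌈log (max_{i≠j} ℓ i j / Δ₁) / log γ⌉ + 1`. -/
noncomputable def numLevels (ℓ : X → X → ℝ) (α γ : ℝ) : ℕ :=
  ⌈Real.log (maxD ℓ / delta1 ℓ α) / Real.log γ⌉₊ + 1

/-- `P 0, …, P (R - 1)` (with `R = numLevels ℓ α γ`) is an `(α, β, γ)`-well-separated
hierarchical partition of `(X, ℓ)`: level `r` is an `(α, β)`-well-separated partition of
margin `Δ_{r+1} = γ ^ r * Δ₁`, and each level coarsens the previous one. -/
def IsWSHP (ℓ : X → X → ℝ) (α β γ : ℝ) (P : ℕ → Finset (Finset (Finset X))) : Prop :=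
  (∀ r < numLevels ℓ α γ, IsWSP ℓ α β (γ ^ r * delta1 ℓ α) (P r)) ∧
  (∀ r, r + 1 < numLevels ℓ α γ →
    ∀ F ∈ P r, ∀ C ∈ F, ∃ F' ∈ P (r + 1), ∃ C' ∈ F', C ⊆ C')

/-- The set of all clusters of a well-separated partition. -/
def clustersOf [DecidableEq X] (P : Finset (Finset (Finset X))) : Finset (Finset X) :=
  P.biUnion id

/-- `diam_p C`: the diameter of the (unique) cluster of the next-level partition `P'`
containing the cluster `C`. -/
noncomputable def parentDiam (ℓ : X → X → ℝ) (P' : Finset (Finset (Finset X)))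
    (C : Finset X) : ℝ :=
  sSup { v | ∃ F ∈ P', ∃ C' ∈ F, C ⊆ C' ∧ v = fdiam ℓ C' }

/-- The hierarchical cost `C^H(q, d)`. -/
noncomputable def CH [DecidableEq X] (ℓ : X → X → ℝ) (b h : ℝ) (R : ℕ)
    (P : ℕ → Finset (Finset (Finset X))) (q d : X → ℝ) : ℝ :=
  h * max ((∑ i, q i) - ∑ i, d i) 0 + b * max ((∑ i, d i) - ∑ i, q i) 0 +
  (∑ r ∈ Finset.range (R - 1), ∑ C ∈ clustersOf (P r),
      parentDiam ℓ (P (r + 1)) C * max ((∑ i ∈ C, d i) - ∑ i ∈ C, q i) 0) +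
  fdiam ℓ Finset.univ / (Fintype.card X : ℝ) * ∑ i, max (d i - q i) 0

/-- `σ_C = √(Σ_{i ∈ C} σ_i²)`. -/
noncomputable def sigC (σ : X → ℝ) (C : Finset X) : ℝ := Real.sqrt (∑ i ∈ C, (σ i) ^ 2)

/-- Feasibility for the GSM covering LP. -/
def GSMFeasible [DecidableEq X] (ℓ : X → X → ℝ) (b h : ℝ) (μ σ : X → ℝ) (R : ℕ)
    (P : ℕ → Finset (Finset (Finset X))) (q : X → ℝ) : Prop :=
  (∀ r, r + 1 < R → ∀ C ∈ clustersOf (P r), 2 * h ≤ parentDiam ℓ (P (r + 1)) C →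
    sigC σ C / 2 * (Real.sqrt ((parentDiam ℓ (P (r + 1)) C - h) / h) -
        Real.sqrt (h / (parentDiam ℓ (P (r + 1)) C - h)))
      ≤ (∑ i ∈ C, q i) - ∑ i ∈ C, μ i) ∧
  (∀ i, σ i / (∑ j, σ j) * (sigC σ Finset.univ / 2) *
      (Real.sqrt (b / h) - Real.sqrt (h / b)) ≤ q i - μ i)

/-- Optimality for the GSM covering LP (minimizing the total safety stock `h (q_X - μ_X)`). -/
def GSMOptimal [DecidableEq X] (ℓ : X → X → ℝ) (b h : ℝ) (μ σ : X → ℝ) (R : ℕ)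
    (P : ℕ → Finset (Finset (Finset X))) (q : X → ℝ) : Prop :=
  GSMFeasible ℓ b h μ σ R P q ∧
  ∀ q' : X → ℝ, GSMFeasible ℓ b h μ σ R P q' →
    h * ((∑ i, q i) - ∑ i, μ i) ≤ h * ((∑ i, q' i) - ∑ i, μ i)

/-- The transportation cost `Θ(u, v)` between two vectors of equal total mass. -/
noncomputable def transCost (ℓ : X → X → ℝ) (u v : X → ℝ) : ℝ :=
  sInf { c | ∃ x : X → X → ℝ, (∀ i j, 0 ≤ x i j) ∧
    (∀ i, ∑ j, x i j = u i) ∧ (∀ j, ∑ i, x i j = v j) ∧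
    c = ∑ i, ∑ j, ℓ i j * x i j }

end Base

section AtomicHelpers
variable {α : Type*} [MeasurableSpace α] {κ : Type*} [Fintype κ]

noncomputable def atomicMeasure (c : κ → ℝ) (v : κ → α) : Measure α :=
  ∑ k : κ, ENNReal.ofReal (c k) • Measure.dirac (v k)

lemma integrable_dirac_of_measurable (f : α → ℝ) (hf : Measurable f) (a : α) :
    Integrable f (Measure.dirac a) := by
  have h : ∀ᵐ x ∂(Measure.dirac a), f x = f a := by
    rw [ae_iff]
    have hs : MeasurableSet {x | ¬ f x = f a} :=
      (hf (MeasurableSet.singleton (f a))).compl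
    rw [Measure.dirac_apply' _ hs]
    simp [Set.indicator]
  exact (integrable_congr h).mpr (integrable_const _)

lemma atomic_integrable (c : κ → ℝ) (v : κ → α) (f : α → ℝ) (hf : Measurable f) :
    Integrable f (atomicMeasure c v) := by
  rw [atomicMeasure, integrable_finset_sum_measure]
  exact fun k _ => (integrable_dirac_of_measurable f hf (v k)).smul_measure ENNReal.ofReal_ne_top

lemma atomic_integral (c : κ → ℝ) (hc : ∀ k, 0 ≤ c k) (v : κ → α) (f : α → ℝ)
    (hf : Measurable f) :
    ∫ x, f x ∂(atomicMeasure c v) = ∑ k : κ, c k * f (v k) := by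
  rw [atomicMeasure, integral_finset_sum_measure
    (fun k _ => (integrable_dirac_of_measurable f hf (v k)).smul_measure ENNReal.ofReal_ne_top)]
  refine Finset.sum_congr rfl fun k _ => ?_
  rw [integral_smul_measure, integral_dirac' f (v k) hf.stronglyMeasurable,
    ENNReal.toReal_ofReal (hc k), smul_eq_mul]

lemma atomic_isProb (c : κ → ℝ) (hc : ∀ k, 0 ≤ c k) (hsum : ∑ k : κ, c k = 1) (v : κ → α) :
    IsProbabilityMeasure (atomicMeasure c v) := by
  constructor
  rw [atomicMeasure]
  have h : ((∑ k : κ, ENNReal.ofReal (c k) • Measure.dirac (v k)) Set.univ)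
      = ∑ k : κ, ENNReal.ofReal (c k) := by
    rw [Measure.coe_finset_sum]
    simp [Measure.smul_apply]
  rw [h, ← ENNReal.ofReal_sum_of_nonneg (fun k _ => hc k), hsum, ENNReal.ofReal_one]

lemma atomic_ae (c : κ → ℝ) (v : κ → α) (P : α → Prop) (hP : MeasurableSet {x | P x})
    (hv : ∀ k, P (v k)) : ∀ᵐ x ∂(atomicMeasure c v), P x := by
  rw [ae_iff, atomicMeasure]
  have h0 : ∀ k : κ, (ENNReal.ofReal (c k) • Measure.dirac (v k)) {x | ¬ P x} = 0 := by
    intro k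
    have hs : MeasurableSet {x | ¬ P x} := hP.compl
    rw [Measure.smul_apply, Measure.dirac_apply' _ hs]
    simp [Set.indicator, hv k]
  rw [Measure.coe_finset_sum]
  simp only [Finset.sum_apply]
  exact Finset.sum_eq_zero fun k _ => h0 k

end AtomicHelpers

lemma sum_mul_ite_eq {ι : Type*} [Fintype ι] [DecidableEq ι] (ℓf : ι → ℝ) (i : ι) (X Y : ℝ) :
    ∑ k : ι, ℓf k * (if i = k then X else Y) = (∑ k : ι, ℓf k) * Y + ℓf i * (X - Y) := by
  have h : ∀ k : ι, ℓf k * (if i = k then X else Y)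
      = ℓf k * Y + (if i = k then ℓf k * (X - Y) else 0) := by
    intro k; by_cases h : i = k <;> simp [h] <;> ring
  rw [Finset.sum_congr rfl fun k _ => h k, Finset.sum_add_distrib, ← Finset.sum_mul,
    Finset.sum_ite_eq]
  simp

lemma sum_mul_ite2_eq {ι : Type*} [Fintype ι] [DecidableEq ι] (ℓf : ι → ℝ) (i j : ι)
    (hij : i ≠ j) (X Y Z : ℝ) :
    ∑ k : ι, ℓf k * (if i = k then X else if j = k then Y else Z)
      = (∑ k : ι, ℓf k) * Z + ℓf i * (X - Z) + ℓf j * (Y - Z) := by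
  have h : ∀ k : ι, ℓf k * (if i = k then X else if j = k then Y else Z)
      = ℓf k * Z + (if i = k then ℓf k * (X - Z) else 0)
        + (if j = k then ℓf k * (Y - Z) else 0) := by
    intro k
    by_cases h1 : i = k
    · by_cases h2 : j = k
      · exact absurd (h1.trans h2.symm) hij
      · simp [h1, h2]; ring
    · by_cases h2 : j = k <;> simp [h1, h2] <;> ring
  rw [Finset.sum_congr rfl fun k _ => h k]
  rw [Finset.sum_add_distrib, Finset.sum_add_distrib, ← Finset.sum_mul,
    Finset.sum_ite_eq, Finset.sum_ite_eq]
  simp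

lemma stmt10_arith (d g s k : ℝ) (hd0 : 0 ≤ d) (hdg : d ≤ g) (hg0 : 0 < g)
    (hs0 : 0 < s) (hsg : s ≤ g) (hk1 : 1 ≤ k) (hg2 : g ^ 2 = s ^ 2 + d ^ 2) :
    1 / (32 * k ^ 2) * (g - d) ≤ (s / (2 * k) / (s / (2 * k) + (d + g))) ^ 2 * g := by
  have hk0 : 0 < k := by linarith
  set A := s / (2 * k) with hA
  have hA0 : 0 < A := by rw [hA]; positivity
  have hAs : A ≤ s := by
    rw [hA, div_le_iff₀ (by linarith : (0:ℝ) < 2 * k)]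
    nlinarith
  have hAg : A ≤ g := hAs.trans hsg
  have hden : 0 < A + (d + g) := by linarith
  rw [show (1:ℝ) / (32 * k ^ 2) * (g - d) = (g - d) / (32 * k ^ 2) by ring]
  rw [div_pow, div_mul_eq_mul_div, le_div_iff₀ (by positivity)]
  have e1 : (A + (d + g)) ^ 2 ≤ (2 * g + d) ^ 2 :=
    pow_le_pow_left₀ (by linarith) (by linarith) 2
  have e2 : (g - d) * (A + (d + g)) ^ 2 ≤ (g - d) * (2 * g + d) ^ 2 :=
    mul_le_mul_of_nonneg_left e1 (by linarith)
  have e3 : (g - d) * (2 * g + d) ^ 2 ≤ 8 * (g ^ 2 - d ^ 2) * g := by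
    have f1 : 0 ≤ g - d := by linarith
    have f2 : 0 ≤ 4 * g ^ 2 + 4 * g * d - d ^ 2 := by
      nlinarith [pow_le_pow_left₀ hd0 hdg 2, mul_nonneg hg0.le hd0]
    nlinarith [mul_nonneg f1 f2]
  have e4 : 8 * (g ^ 2 - d ^ 2) * g = 8 * s ^ 2 * g := by rw [hg2]; ring
  have hkey2 : (g - d) * (A + (d + g)) ^ 2 ≤ 8 * s ^ 2 * g := by linarith
  have hA2 : A ^ 2 = s ^ 2 / (4 * k ^ 2) := by
    rw [hA, div_pow]; congr 1; ring
  rw [hA2]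
  calc (g - d) / (32 * k ^ 2) * (A + (d + g)) ^ 2
      = ((g - d) * (A + (d + g)) ^ 2) / (32 * k ^ 2) := by ring
    _ ≤ (8 * s ^ 2 * g) / (32 * k ^ 2) := by
        exact (div_le_div_iff_of_pos_right (by positivity)).mpr hkey2
    _ = s ^ 2 / (4 * k ^ 2) * g := by ring

set_option maxHeartbeats 2000000 in
/-- for every bound `ν₀` on the coefficient of variation there is a constant
`c > 0` such that for all `S ⊆ T ⊆ X` with `S` nonempty and every `Q ≥ μ_S` there is a
probability distribution `D` on `ℝ₊^T` with mean `μ_T` and covariance `Σ_T` with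
`E_{d ∼ D}[(d_S - Q)⁺ · 1{d_i ≥ μ_i ∀ i ∈ T}] ≥ c (√(σ_S² + (Q - μ_S)²) - (Q - μ_S))`. -/
theorem stmt10 (ν₀ : ℝ) (hν₀ : 0 < ν₀) :
    ∃ c : ℝ, 0 < c ∧
      ∀ (X : Type) [Fintype X] [DecidableEq X] (μ σ : X → ℝ),
        (∀ i, 0 < μ i) → (∀ i, 0 < σ i) → (∀ i, σ i / μ i ≤ ν₀) →
        ∀ S T : Finset X, S ⊆ T → S.Nonempty → ∀ Q : ℝ, (∑ i ∈ S, μ i) ≤ Q →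
        ∃ D : Measure ({ i // i ∈ T } → ℝ),
          IsProbabilityMeasure D ∧
          (∀ᵐ d ∂D, ∀ i, 0 ≤ d i) ∧
          (∀ i : { i // i ∈ T }, Integrable (fun d => d i) D ∧ ∫ d, d i ∂D = μ i.1) ∧
          (∀ i j : { i // i ∈ T },
            Integrable (fun d => (d i - μ i.1) * (d j - μ j.1)) D) ∧
          (∀ i : { i // i ∈ T }, ∫ d, (d i - μ i.1) ^ 2 ∂D = (σ i.1) ^ 2) ∧
          (∀ i j : { i // i ∈ T }, i ≠ j →
            ∫ d, (d i - μ i.1) * (d j - μ j.1) ∂D = 0) ∧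
          Integrable (fun d : { i // i ∈ T } → ℝ =>
            max ((∑ i : { i // i ∈ T }, if i.1 ∈ S then d i else 0) - Q) 0 *
              Set.indicator {d : { i // i ∈ T } → ℝ | ∀ i, μ i.1 ≤ d i}
                (fun _ => (1 : ℝ)) d) D ∧
          c * (Real.sqrt ((∑ i ∈ S, (σ i) ^ 2) + (Q - ∑ i ∈ S, μ i) ^ 2)
                - (Q - ∑ i ∈ S, μ i)) ≤
            ∫ d, max ((∑ i : { i // i ∈ T }, if i.1 ∈ S then d i else 0) - Q) 0 *
              Set.indicator {d : { i // i ∈ T } → ℝ | ∀ i, μ i.1 ≤ d i}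
                (fun _ => (1 : ℝ)) d ∂D := by
  refine ⟨1 / (32 * (max ν₀ 1) ^ 2), by positivity, ?_⟩
  intro X _ _ μ σ hμ hσ hcv S T hST hS Q hQ
  set K : ℝ := max ν₀ 1 with hK_def
  clear_value K
  have hK1 : (1:ℝ) ≤ K := by rw [hK_def]; exact le_max_right _ _
  have hKν : ν₀ ≤ K := by rw [hK_def]; exact le_max_left _ _
  have hK0 : (0:ℝ) < K := by linarith
  set σS : ℝ := Real.sqrt (∑ i ∈ S, (σ i) ^ 2) with hσS_def
  clear_value σS
  have hsum_pos : 0 < ∑ i ∈ S, (σ i) ^ 2 :=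
    Finset.sum_pos (fun i _ => by have := hσ i; positivity) hS
  have hσS_pos : 0 < σS := by rw [hσS_def]; exact Real.sqrt_pos.mpr hsum_pos
  have hσS2 : σS ^ 2 = ∑ i ∈ S, (σ i) ^ 2 := by rw [hσS_def]; exact Real.sq_sqrt hsum_pos.le
  set δ : ℝ := Q - ∑ i ∈ S, μ i with hδ_def
  clear_value δ
  have hδ0 : 0 ≤ δ := by rw [hδ_def]; linarith
  set G : ℝ := Real.sqrt ((∑ i ∈ S, (σ i) ^ 2) + δ ^ 2) with hG_def
  clear_value G
  have hG_nonneg : 0 ≤ G := by rw [hG_def]; exact Real.sqrt_nonneg _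
  have hG2 : G ^ 2 = σS ^ 2 + δ ^ 2 := by
    rw [hG_def, Real.sq_sqrt (by positivity), hσS2]
  have hGσ : σS ≤ G := by nlinarith
  have hG0 : 0 < G := lt_of_lt_of_le hσS_pos hGσ
  have hGδ : δ ≤ G := by nlinarith
  set A : ℝ := σS / (2 * K) with hA_def
  clear_value A
  have hA0 : 0 < A := by rw [hA_def]; positivity
  have hAσS : A ≤ σS := by
    rw [hA_def, div_le_iff₀ (by positivity)]; nlinarith
  have hAG : A ≤ G := hAσS.trans hGσ
  have hden : 0 < A + (δ + G) := by linarith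
  set q : ℝ := A / (A + (δ + G)) with hq_def
  clear_value q
  have hq0 : 0 < q := by rw [hq_def]; positivity
  have hq1 : q < 1 := by rw [hq_def, div_lt_one hden]; linarith
  have h1q : 0 < 1 - q := by linarith
  have hqA : q * (A + (δ + G)) = A := by rw [hq_def]; field_simp
  -- the index type
  have hTne : T.Nonempty := ⟨hS.choose, hST hS.choose_spec⟩
  haveI : Nonempty { i // i ∈ T } := ⟨⟨hTne.choose, hTne.choose_spec⟩⟩
  set n : ℝ := (Fintype.card { i // i ∈ T } : ℝ) with hn_def
  clear_value n
  have hn1 : (1:ℝ) ≤ n := by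
    rw [hn_def]; exact_mod_cast Fintype.card_pos
  have hsqn1 : 1 ≤ Real.sqrt n := by
    rw [show (1:ℝ) = Real.sqrt 1 by simp]; exact Real.sqrt_le_sqrt hn1
  have hsqn0 : 0 < Real.sqrt n := by linarith
  have hσν : ∀ i, σ i ≤ ν₀ * μ i := by
    intro i
    have := hcv i
    rw [div_le_iff₀ (hμ i)] at this
    linarith
  have hσ_le : ∀ i ∈ S, σ i ≤ σS := by
    intro i hi
    have h2 : σ i ^ 2 ≤ σS ^ 2 := by
      rw [hσS2]
      exact Finset.single_le_sum (f := fun j => (σ j) ^ 2) (fun j _ => by positivity) hi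
    nlinarith [hσ i, hσS_pos]
  -- the down-depths
  set w : { i // i ∈ T } → ℝ :=
    fun i => if i.1 ∈ S then σ i.1 / (2 * K * σS) else 1 / (2 * K * Real.sqrt n) with hw_def
  clear_value w
  have hw_pos : ∀ i, 0 < w i := by
    intro i; rw [hw_def]; dsimp only
    split
    · have := hσ i.1
      positivity
    · positivity
  have hKμ : ∀ x, σ x ≤ K * μ x := by
    intro x
    have h2 := hσν x
    nlinarith [hμ x]
  have hwσμ : ∀ i : { i // i ∈ T }, σ i.1 * w i ≤ μ i.1 := by
    intro i; rw [hw_def]; dsimp only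
    split
    · rename_i hiS
      have h1 : σ i.1 ≤ σS := hσ_le i.1 hiS
      have h5 : 0 < σ i.1 := hσ i.1
      have h2' : σ i.1 ≤ K * μ i.1 := hKμ i.1
      rw [mul_div_assoc', div_le_iff₀ (by positivity : (0:ℝ) < 2 * K * σS)]
      nlinarith [mul_nonneg (sub_nonneg.mpr h1) h5.le,
        mul_nonneg (sub_nonneg.mpr h2') hσS_pos.le,
        mul_nonneg (mul_nonneg hK0.le hσS_pos.le) (hμ i.1).le]
    · have h5 : 0 < σ i.1 := hσ i.1
      have h2' : σ i.1 ≤ K * μ i.1 := hKμ i.1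
      rw [mul_one_div, div_le_iff₀ (by positivity : (0:ℝ) < 2 * K * Real.sqrt n)]
      nlinarith [mul_nonneg (mul_nonneg (by linarith : (0:ℝ) ≤ 2 * K) (hμ i.1).le)
        (sub_nonneg.mpr hsqn1), mul_nonneg hK0.le (hμ i.1).le]
  have hw_sum : ∑ i : { i // i ∈ T }, (w i) ^ 2 ≤ 1 := by
    have hpt : ∀ i : { i // i ∈ T }, (w i) ^ 2
        = (if i.1 ∈ S then (σ i.1) ^ 2 / (2 * K * σS) ^ 2 else 1 / (2 * K * Real.sqrt n) ^ 2) := by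
      intro i; rw [hw_def]; dsimp only
      split
      · rw [div_pow]
      · rw [div_pow, one_pow]
    have h1 : ∑ i : { i // i ∈ T }, (w i) ^ 2
        = ∑ i ∈ T, (if i ∈ S then (σ i) ^ 2 / (2 * K * σS) ^ 2
            else 1 / (2 * K * Real.sqrt n) ^ 2) := by
      rw [Finset.sum_congr rfl fun i _ => hpt i]
      exact Finset.sum_coe_sort T
        (fun i => if i ∈ S then (σ i) ^ 2 / (2 * K * σS) ^ 2 else 1 / (2 * K * Real.sqrt n) ^ 2)
    rw [h1, ← Finset.sum_sdiff hST]
    have h2 : ∑ i ∈ T \ S, (if i ∈ S then (σ i) ^ 2 / (2 * K * σS) ^ 2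
        else 1 / (2 * K * Real.sqrt n) ^ 2) = (T \ S).card * (1 / (2 * K * Real.sqrt n) ^ 2) := by
      rw [Finset.sum_congr rfl (fun i hi => by
        rw [if_neg (Finset.mem_sdiff.mp hi).2]), Finset.sum_const, nsmul_eq_mul]
    have h3 : ∑ i ∈ S, (if i ∈ S then (σ i) ^ 2 / (2 * K * σS) ^ 2
        else 1 / (2 * K * Real.sqrt n) ^ 2) = (∑ i ∈ S, (σ i) ^ 2) / (2 * K * σS) ^ 2 := by
      rw [Finset.sum_congr rfl (fun i hi => by rw [if_pos hi]), ← Finset.sum_div]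
    rw [h2, h3, ← hσS2]
    have hK2 : 1 ≤ K ^ 2 := by nlinarith
    have h4 : σS ^ 2 / (2 * K * σS) ^ 2 ≤ 1 / 4 := by
      rw [mul_pow, mul_pow, div_le_iff₀ (by positivity)]
      nlinarith [mul_le_mul_of_nonneg_right hK2 (sq_nonneg σS)]
    have h5 : ((T \ S).card : ℝ) * (1 / (2 * K * Real.sqrt n) ^ 2) ≤ 1 / 4 := by
      have hc : ((T \ S).card : ℝ) ≤ n := by
        rw [hn_def]
        have : (T \ S).card ≤ T.card := Finset.card_le_card (Finset.sdiff_subset)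
        have hTc : Fintype.card { i // i ∈ T } = T.card := Fintype.card_coe T
        rw [hTc]; exact_mod_cast this
      have hsq : (2 * K * Real.sqrt n) ^ 2 = 4 * K ^ 2 * n := by
        rw [mul_pow, mul_pow, Real.sq_sqrt (by linarith)]; ring
      rw [hsq]
      rw [mul_one_div, div_le_iff₀ (by positivity)]
      nlinarith [mul_nonneg (sub_nonneg.mpr hK2) (by linarith : (0:ℝ) ≤ n)]
    linarith
  -- main data
  set a : { i // i ∈ T } → ℝ := fun i => w i * (1 - q) / q with ha_def
  clear_value a
  set Hh : { i // i ∈ T } → ℝ := fun i => 1 / (w i * (1 - q)) with hHh_def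
  clear_value Hh
  set ℓf : { i // i ∈ T } → ℝ := fun i => (w i) ^ 2 * (1 - q) ^ 2 with hℓf_def
  clear_value ℓf
  set p : ℝ := q ^ 2 with hp_def
  clear_value p
  set L : ℝ := ∑ i : { i // i ∈ T }, ℓf i with hL_def
  clear_value L
  set q0 : ℝ := 1 - p - L with hq0_def
  clear_value q0
  have ha_nonneg : ∀ i, 0 ≤ a i := by
    intro i; rw [ha_def]; dsimp only
    exact div_nonneg (mul_nonneg (hw_pos i).le h1q.le) hq0.le
  have hHh_pos : ∀ i, 0 < Hh i := by
    intro i; rw [hHh_def]; dsimp only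
    exact div_pos one_pos (mul_pos (hw_pos i) h1q)
  have hℓf_nonneg : ∀ i, 0 ≤ ℓf i := by
    intro i; rw [hℓf_def]; dsimp only; positivity
  have hL_le : L ≤ (1 - q) ^ 2 := by
    rw [hL_def, hℓf_def]
    calc ∑ i : { i // i ∈ T }, (w i) ^ 2 * (1 - q) ^ 2
        = (∑ i : { i // i ∈ T }, (w i) ^ 2) * (1 - q) ^ 2 := by rw [Finset.sum_mul]
      _ ≤ 1 * (1 - q) ^ 2 := by
          apply mul_le_mul_of_nonneg_right hw_sum (by positivity)
      _ = (1 - q) ^ 2 := by ring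
  have hq0_nonneg : 0 ≤ q0 := by
    rw [hq0_def, hp_def]; nlinarith
  have hp_nonneg : 0 ≤ p := by rw [hp_def]; positivity
  -- scalar identities
  have idA : ∀ i, p * a i + ℓf i * Hh i = (1 - p) * w i := by
    intro i
    rw [hp_def, ha_def, hHh_def, hℓf_def]; dsimp only
    have hwne := (hw_pos i).ne'
    have h1 : (1:ℝ) - q ≠ 0 := h1q.ne'
    field_simp
    ring
  have idB : ∀ i, p * (a i) ^ 2 + ℓf i * (Hh i - w i) ^ 2 + (1 - p - ℓf i) * (w i) ^ 2 = 1 := by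
    intro i
    rw [hp_def, ha_def, hHh_def, hℓf_def]; dsimp only
    have hwne := (hw_pos i).ne'
    have h1 : (1:ℝ) - q ≠ 0 := h1q.ne'
    field_simp
    ring
  have idC : ∀ i j, p * a i * a j + (1 - p) * (w i * w j)
      - (ℓf i * Hh i) * w j - (ℓf j * Hh j) * w i = 0 := by
    intro i j
    rw [hp_def, ha_def, hHh_def, hℓf_def]; dsimp only
    have hwi := (hw_pos i).ne'
    have hwj := (hw_pos j).ne'
    have h1 : (1:ℝ) - q ≠ 0 := h1q.ne'
    field_simp
    ring
  -- the atoms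
  set vp : { i // i ∈ T } → ℝ := fun i => μ i.1 + σ i.1 * a i with hvp_def
  clear_value vp
  set vm : { i // i ∈ T } → ℝ := fun i => μ i.1 - σ i.1 * w i with hvm_def
  clear_value vm
  set vk : { i // i ∈ T } → { i // i ∈ T } → ℝ :=
    fun k i => if i = k then μ i.1 + σ i.1 * (Hh i - w i) else μ i.1 - σ i.1 * w i with hvk_def
  clear_value vk
  have hvk_eval : ∀ k i, vk k i = if i = k then vm i + σ i.1 * Hh i else vm i := by
    intro k i
    rw [hvk_def, hvm_def]; dsimp only
    split
    · ring
    · ring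
  -- the measure
  set C : Option (Option { i // i ∈ T }) → ℝ :=
    fun o => o.elim p (fun o' => o'.elim q0 ℓf) with hC_def
  set V : Option (Option { i // i ∈ T }) → ({ i // i ∈ T } → ℝ) :=
    fun o => o.elim vp (fun o' => o'.elim vm vk) with hV_def
  have hC_nonneg : ∀ o, 0 ≤ C o := by
    rintro (_ | _ | k)
    · exact hp_nonneg
    · exact hq0_nonneg
    · exact hℓf_nonneg k
  have hC_sum : ∑ o, C o = 1 := by
    rw [hC_def]
    rw [Fintype.sum_option, Fintype.sum_option]
    dsimp only [Option.elim]
    rw [← hL_def, hq0_def]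
    ring
  -- master integral formula
  have hkey : ∀ f : ({ i // i ∈ T } → ℝ) → ℝ, Measurable f →
      ∫ d, f d ∂(atomicMeasure C V)
        = p * f vp + q0 * f vm + ∑ k, ℓf k * f (vk k) := by
    intro f hf
    rw [atomic_integral C hC_nonneg V f hf, Fintype.sum_option, Fintype.sum_option]
    simp only [hC_def, hV_def, Option.elim]
    ring
  -- measurability facts
  have hmeas_nonneg : MeasurableSet {d : { i // i ∈ T } → ℝ | ∀ i, 0 ≤ d i} := by
    have he : {d : { i // i ∈ T } → ℝ | ∀ i, 0 ≤ d i} = ⋂ i, {d | 0 ≤ d i} := by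
      ext d; simp [Set.mem_iInter]
    rw [he]
    exact MeasurableSet.iInter fun i =>
      measurableSet_le measurable_const (measurable_pi_apply i)
  have hmeas_ind : MeasurableSet {d : { i // i ∈ T } → ℝ | ∀ i, μ i.1 ≤ d i} := by
    have he : {d : { i // i ∈ T } → ℝ | ∀ i, μ i.1 ≤ d i} = ⋂ i, {d | μ i.1 ≤ d i} := by
      ext d; simp [Set.mem_iInter]
    rw [he]
    exact MeasurableSet.iInter fun i =>
      measurableSet_le measurable_const (measurable_pi_apply i)
  have hmeas_sum : Measurable fun d : { i // i ∈ T } → ℝ =>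
      ∑ i : { i // i ∈ T }, (if i.1 ∈ S then d i else 0) := by
    apply Finset.measurable_sum
    intro i _
    by_cases h : i.1 ∈ S
    · simpa [h] using measurable_pi_apply i
    · simpa [h] using (measurable_const : Measurable fun _ : { i // i ∈ T } → ℝ => (0:ℝ))
  have hmeas_g : Measurable (fun d : { i // i ∈ T } → ℝ =>
      max ((∑ i : { i // i ∈ T }, if i.1 ∈ S then d i else 0) - Q) 0 *
        Set.indicator {d : { i // i ∈ T } → ℝ | ∀ i, μ i.1 ≤ d i} (fun _ => (1:ℝ)) d) :=
    ((hmeas_sum.sub measurable_const).max measurable_const).mul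
      (Measurable.indicator measurable_const hmeas_ind)
  -- nonnegativity of atoms
  have hvp_ge : ∀ i, μ i.1 ≤ vp i := by
    intro i; rw [hvp_def]; dsimp only
    have : 0 ≤ σ i.1 * a i := mul_nonneg (hσ i.1).le (ha_nonneg i)
    linarith
  have hvm_ge0 : ∀ i, 0 ≤ vm i := by
    intro i; rw [hvm_def]; dsimp only
    have := hwσμ i; linarith
  have hvp_ge0 : ∀ i, 0 ≤ vp i := fun i => le_trans (hμ i.1).le (hvp_ge i)
  have hvk_ge0 : ∀ k i, 0 ≤ vk k i := by
    intro k i; rw [hvk_eval k i]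
    have h1 := hvm_ge0 i
    split
    · have : 0 ≤ σ i.1 * Hh i := mul_nonneg (hσ i.1).le (hHh_pos i).le
      linarith
    · exact h1
  refine ⟨atomicMeasure C V, atomic_isProb C hC_nonneg hC_sum V, ?_, ?_, ?_, ?_, ?_, ?_, ?_⟩
  · -- a.e. nonnegative
    apply atomic_ae C V (fun d => ∀ i, 0 ≤ d i) hmeas_nonneg
    rintro (_ | _ | k) <;> simp only [hV_def, Option.elim]
    · exact hvp_ge0
    · exact hvm_ge0
    · exact hvk_ge0 k
  · -- mean
    intro i
    refine ⟨atomic_integrable C V _ (measurable_pi_apply i), ?_⟩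
    rw [hkey (fun d => d i) (measurable_pi_apply i)]
    have hsum2 : ∑ k, ℓf k * vk k i
        = L * vm i + ℓf i * ((vm i + σ i.1 * Hh i) - vm i) := by
      rw [Finset.sum_congr rfl fun k _ => by rw [hvk_eval k i], sum_mul_ite_eq ℓf i,
        ← hL_def]
    rw [hsum2, hvp_def, hvm_def]; dsimp only
    rw [hq0_def]
    linear_combination σ i.1 * idA i
  · -- integrability of products
    intro i j
    exact atomic_integrable C V _
      (((measurable_pi_apply i).sub measurable_const).mul
        ((measurable_pi_apply j).sub measurable_const))
  · -- variances
    intro i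
    have hf : Measurable fun d : { i // i ∈ T } → ℝ => (d i - μ i.1) ^ 2 :=
      ((measurable_pi_apply i).sub measurable_const).pow_const 2
    rw [hkey (fun d => (d i - μ i.1) ^ 2) hf]
    have hterm : ∀ k, (vk k i - μ i.1) ^ 2
        = if i = k then (vm i + σ i.1 * Hh i - μ i.1) ^ 2 else (vm i - μ i.1) ^ 2 := by
      intro k
      rw [hvk_eval k i, apply_ite (fun t => (t - μ i.1) ^ 2)]
    have hsum2 : ∑ k, ℓf k * (vk k i - μ i.1) ^ 2
        = L * (vm i - μ i.1) ^ 2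
          + ℓf i * ((vm i + σ i.1 * Hh i - μ i.1) ^ 2 - (vm i - μ i.1) ^ 2) := by
      rw [Finset.sum_congr rfl fun k _ => by rw [hterm k], sum_mul_ite_eq ℓf i, ← hL_def]
    rw [hsum2, hvp_def, hvm_def]; dsimp only
    rw [hq0_def]
    linear_combination (σ i.1) ^ 2 * idB i
  · -- zero covariances
    intro i j hij
    have hf : Measurable fun d : { i // i ∈ T } → ℝ => (d i - μ i.1) * (d j - μ j.1) :=
      ((measurable_pi_apply i).sub measurable_const).mul
        ((measurable_pi_apply j).sub measurable_const)
    rw [hkey (fun d => (d i - μ i.1) * (d j - μ j.1)) hf]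
    have hterm : ∀ k, (vk k i - μ i.1) * (vk k j - μ j.1)
        = if i = k then (vm i + σ i.1 * Hh i - μ i.1) * (vm j - μ j.1)
          else if j = k then (vm i - μ i.1) * (vm j + σ j.1 * Hh j - μ j.1)
          else (vm i - μ i.1) * (vm j - μ j.1) := by
      intro k
      rw [hvk_eval k i, hvk_eval k j]
      by_cases h1 : i = k
      · rw [if_pos h1, if_pos h1, if_neg (fun h2 => hij (h1.trans h2.symm))]
      · rw [if_neg h1, if_neg h1]
        by_cases h2 : j = k
        · rw [if_pos h2, if_pos h2]
        · rw [if_neg h2, if_neg h2]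
    have hsum2 : ∑ k, ℓf k * ((vk k i - μ i.1) * (vk k j - μ j.1))
        = L * ((vm i - μ i.1) * (vm j - μ j.1))
          + ℓf i * ((vm i + σ i.1 * Hh i - μ i.1) * (vm j - μ j.1)
              - (vm i - μ i.1) * (vm j - μ j.1))
          + ℓf j * ((vm i - μ i.1) * (vm j + σ j.1 * Hh j - μ j.1)
              - (vm i - μ i.1) * (vm j - μ j.1)) := by
      rw [Finset.sum_congr rfl fun k _ => by rw [hterm k], sum_mul_ite2_eq ℓf i j hij,
        ← hL_def]
    rw [hsum2, hvp_def, hvm_def]; dsimp only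
    rw [hq0_def]
    linear_combination (σ i.1 * σ j.1) * idC i j
  · -- integrability of the payoff
    exact atomic_integrable C V _ hmeas_g
  · -- the payoff bound
    rw [hkey _ hmeas_g]
    -- value at the "all-up" atom
    have hsum_vp : (∑ i : { i // i ∈ T }, if i.1 ∈ S then vp i else 0)
        = (∑ i ∈ S, μ i) + (δ + G) := by
      have hpt : ∀ i : { i // i ∈ T }, (if i.1 ∈ S then vp i else 0)
          = (if i.1 ∈ S then μ i.1 + σ i.1 * σ i.1 * ((1 - q) / (q * (2 * K * σS)))
              else 0) := by
        intro i
        by_cases h : i.1 ∈ S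
        · rw [if_pos h, if_pos h, hvp_def]; dsimp only
          rw [ha_def]; dsimp only
          rw [hw_def]; dsimp only
          rw [if_pos h]
          ring
        · rw [if_neg h, if_neg h]
      rw [Finset.sum_congr rfl fun i _ => hpt i]
      rw [Finset.sum_coe_sort T
        (fun x => if x ∈ S then μ x + σ x * σ x * ((1 - q) / (q * (2 * K * σS))) else 0)]
      rw [Finset.sum_ite_mem, Finset.inter_eq_right.mpr hST, Finset.sum_add_distrib]
      congr 1
      rw [← Finset.sum_mul]
      have hss : ∑ i ∈ S, σ i * σ i = σS ^ 2 := by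
        rw [hσS2]; exact Finset.sum_congr rfl fun i _ => by ring
      rw [hss]
      have h2 := hqA
      rw [hA_def] at h2
      have hKne : (2:ℝ) * K ≠ 0 := by positivity
      have hqne : q ≠ 0 := hq0.ne'
      have hσSne : σS ≠ 0 := hσS_pos.ne'
      field_simp at h2 ⊢
      linear_combination (-1) * h2
    have hindvp : Set.indicator {d : { i // i ∈ T } → ℝ | ∀ i, μ i.1 ≤ d i}
        (fun _ => (1:ℝ)) vp = 1 :=
      Set.indicator_of_mem
        (show vp ∈ {d : { i // i ∈ T } → ℝ | ∀ i, μ i.1 ≤ d i} from fun i => hvp_ge i) _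
    have hgvp : max ((∑ i : { i // i ∈ T }, if i.1 ∈ S then vp i else 0) - Q) 0 *
        Set.indicator {d : { i // i ∈ T } → ℝ | ∀ i, μ i.1 ≤ d i} (fun _ => (1:ℝ)) vp
          = G := by
      rw [hindvp, hsum_vp, mul_one]
      have he : (∑ i ∈ S, μ i) + (δ + G) - Q = G := by rw [hδ_def]; ring
      rw [he, max_eq_left hG0.le]
    -- all other atoms contribute nonnegatively
    have hg_nonneg : ∀ d : { i // i ∈ T } → ℝ,
        0 ≤ max ((∑ i : { i // i ∈ T }, if i.1 ∈ S then d i else 0) - Q) 0 *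
          Set.indicator {d : { i // i ∈ T } → ℝ | ∀ i, μ i.1 ≤ d i} (fun _ => (1:ℝ)) d :=
      fun d => mul_nonneg (le_max_right _ 0)
        (Set.indicator_nonneg (fun _ _ => zero_le_one) d)
    have hsum_nonneg : 0 ≤ ∑ k, ℓf k *
        (max ((∑ i : { i // i ∈ T }, if i.1 ∈ S then vk k i else 0) - Q) 0 *
          Set.indicator {d : { i // i ∈ T } → ℝ | ∀ i, μ i.1 ≤ d i} (fun _ => (1:ℝ)) (vk k)) :=
      Finset.sum_nonneg fun k _ => mul_nonneg (hℓf_nonneg k) (hg_nonneg (vk k))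
    have hmain : 1 / (32 * K ^ 2) * (G - δ) ≤ p * G := by
      rw [hp_def, hq_def, hA_def]
      exact stmt10_arith δ G σS K hδ0 hGδ hG0 hσS_pos hGσ hK1 hG2
    rw [hgvp]
    have h1 : 0 ≤ q0 *
        (max ((∑ i : { i // i ∈ T }, if i.1 ∈ S then vm i else 0) - Q) 0 *
          Set.indicator {d : { i // i ∈ T } → ℝ | ∀ i, μ i.1 ≤ d i} (fun _ => (1:ℝ)) vm) :=
      mul_nonneg hq0_nonneg (hg_nonneg vm)
    calc 1 / (32 * K ^ 2) * (G - δ) ≤ p * G := hmain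
      _ ≤ p * G + q0 *
          (max ((∑ i : { i // i ∈ T }, if i.1 ∈ S then vm i else 0) - Q) 0 *
            Set.indicator {d : { i // i ∈ T } → ℝ | ∀ i, μ i.1 ≤ d i} (fun _ => (1:ℝ)) vm) :=
        le_add_of_nonneg_right h1
      _ ≤ _ := le_add_of_nonneg_right hsum_nonneg
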